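/- Let L : L²([0,1]) → L²([0,1]) be a compact, integral-preserving bounded linear operator satisfying the mixing condition (A1). Then: (i) there is exactly one f₀ ∈ L² with L f₀ = f₀ and ∫ f₀ dm = 1; (ii) L contracts V exponentially: there exist C ≥ 0 and λ < 0 such that ‖Lⁿ g‖₂ ≤ C e^{λ n} ‖g‖₂ for every g ∈ V and every n ≥ 0. -/

import Mathlib

open MeasureTheory

/-- Lebesgue measure restricted to the unit interval `[0,1]`. -/
noncomputable def μ01 : Measure ℝ := volume.restrict (Set.Icc (0 : ℝ) 1)

instance : IsFiniteMeasure μ01 := by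
  constructor
  simp [μ01, Real.volume_Icc]

/-- The constant function `1` as an element of `L²([0,1])`. -/
noncomputable def oneL : Lp ℝ 2 μ01 := Lp.const 2 μ01 (1 : ℝ)

lemma oneL_coeFn : (oneL : Lp ℝ 2 μ01) =ᵐ[μ01] fun _ => (1 : ℝ) :=
  MeasureTheory.Lp.coeFn_const 2 μ01 (1 : ℝ)

lemma integral_eq_inner (g : Lp ℝ 2 μ01) :
    ∫ x, g x ∂μ01 = @inner ℝ _ _ oneL g := by
  rw [L2.inner_def]
  refine (integral_congr_ae ?_).symm
  filter_upwards [oneL_coeFn] with x hx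
  show @inner ℝ _ _ (oneL x) (g x) = g x
  simp [hx, RCLike.inner_apply]

lemma integral_oneL : ∫ x, oneL x ∂μ01 = 1 := by
  rw [integral_congr_ae oneL_coeFn]
  simp [μ01, Real.volume_Icc]

/-- The integral, as a continuous linear functional on `L²([0,1])`. -/
noncomputable def Iclm : Lp ℝ 2 μ01 →L[ℝ] ℝ := innerSL ℝ oneL

lemma Iclm_apply (g : Lp ℝ 2 μ01) : Iclm g = ∫ x, g x ∂μ01 :=
  (integral_eq_inner g).symm

/-- The closed subspace `V` of zero-mean functions. -/
noncomputable def Vs : Submodule ℝ (Lp ℝ 2 μ01) := LinearMap.ker (Iclm : Lp ℝ 2 μ01 →ₗ[ℝ] ℝ)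

lemma mem_Vs {g : Lp ℝ 2 μ01} : g ∈ Vs ↔ ∫ x, g x ∂μ01 = 0 := by
  rw [Vs, LinearMap.mem_ker, ← Iclm_apply]
  rfl

lemma Vs_closed : IsClosed (Vs : Set (Lp ℝ 2 μ01)) :=
  ContinuousLinearMap.isClosed_ker Iclm

instance : CompleteSpace Vs := Vs_closed.completeSpace_coe

set_option maxHeartbeats 1000000 in
theorem mixing_unique_fixed_point_and_exponential_contraction
    (L : Lp ℝ 2 μ01 →L[ℝ] Lp ℝ 2 μ01)
    (hcomp : IsCompactOperator L)
    (hint : ∀ g : Lp ℝ 2 μ01, ∫ x, (L g) x ∂μ01 = ∫ x, g x ∂μ01)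
    (hmix : ∀ g : Lp ℝ 2 μ01, (∫ x, g x ∂μ01) = 0 →
      Filter.Tendsto (fun n : ℕ => ‖(L ^ n) g‖) Filter.atTop (nhds 0)) :
    (∃! f₀ : Lp ℝ 2 μ01, L f₀ = f₀ ∧ ∫ x, f₀ x ∂μ01 = 1) ∧
    (∃ C : ℝ, 0 ≤ C ∧ ∃ lam : ℝ, lam < 0 ∧
      ∀ g : Lp ℝ 2 μ01, (∫ x, g x ∂μ01) = 0 →
        ∀ n : ℕ, ‖(L ^ n) g‖ ≤ C * Real.exp (lam * n) * ‖g‖) := by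
  classical
  -- L preserves V
  have hMem : ∀ g ∈ Vs, L g ∈ Vs := by
    intro g hg
    exact mem_Vs.2 (by rw [hint]; exact mem_Vs.1 hg)
  have hMemPow : ∀ (n : ℕ) (g : Lp ℝ 2 μ01), g ∈ Vs → (L ^ n) g ∈ Vs := by
    intro n
    induction n with
    | zero => intro g hg; simpa using hg
    | succ n ih =>
        intro g hg
        rw [pow_succ, ContinuousLinearMap.mul_apply]
        exact ih _ (hMem g hg)
  -- Banach–Steinhaus: uniform bound on V
  obtain ⟨M0, hM0⟩ :=
    banach_steinhaus (g := fun n : ℕ => (L ^ n).comp (Submodule.subtypeL Vs))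
      (fun x => by
        obtain ⟨c, hc⟩ := (hmix x.1 (mem_Vs.1 x.2)).bddAbove_range
        exact ⟨c, fun n => hc ⟨n, rfl⟩⟩)
  set M : ℝ := max M0 1 with hMdef
  have hM1 : (1 : ℝ) ≤ M := le_max_right _ _
  have hMpos : (0 : ℝ) < M := lt_of_lt_of_le one_pos hM1
  have hM : ∀ (n : ℕ) (g : Lp ℝ 2 μ01), g ∈ Vs → ‖(L ^ n) g‖ ≤ M * ‖g‖ := by
    intro n g hg
    have h := ((L ^ n).comp (Submodule.subtypeL Vs)).le_opNorm (⟨g, hg⟩ : Vs)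
    have h2 : ‖(L ^ n).comp (Submodule.subtypeL Vs)‖ * ‖(⟨g, hg⟩ : Vs)‖ ≤ M * ‖g‖ := by
      have : ‖(⟨g, hg⟩ : Vs)‖ = ‖g‖ := rfl
      rw [this]
      exact mul_le_mul_of_nonneg_right ((hM0 n).trans (le_max_left _ _)) (norm_nonneg _)
    exact le_trans h h2
  -- Compactness
  have hK : IsCompact (closure (⇑L '' Metric.closedBall 0 1)) := by
    have := IsCompactOperator.isCompact_closure_image_closedBall (𝕜₁ := ℝ)
      (f := (L : Lp ℝ 2 μ01 →ₗ[ℝ] Lp ℝ 2 μ01)) hcomp 1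
    simpa using this
  set S : Set (Lp ℝ 2 μ01) := closure (⇑L '' (Metric.closedBall 0 1 ∩ ↑Vs)) with hSdef
  have hS_sub : S ⊆ closure (⇑L '' Metric.closedBall 0 1) :=
    closure_mono (Set.image_mono Set.inter_subset_left)
  have hScomp : IsCompact S := hK.of_isClosed_subset isClosed_closure hS_sub
  have hSV : S ⊆ (Vs : Set (Lp ℝ 2 μ01)) := by
    refine closure_minimal ?_ Vs_closed
    rintro y ⟨g, ⟨-, hg⟩, rfl⟩
    exact hMem g hg
  -- Finite subcover + eventual smallness
  set δ : ℝ := (8 * (M + 1))⁻¹ with hδdef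
  have hδpos : 0 < δ := by positivity
  obtain ⟨t, hts, hcover⟩ := hScomp.elim_nhds_subcover (fun x => Metric.ball x δ)
    (fun x _ => Metric.ball_mem_nhds x hδpos)
  have hev : ∀ᶠ n in Filter.atTop, ∀ c ∈ t, ‖(L ^ n) c‖ < 1 / 8 := by
    rw [Filter.eventually_all_finset]
    intro c hc
    exact (hmix c (mem_Vs.1 (hSV (hts c hc)))).eventually (gt_mem_nhds (by norm_num))
  obtain ⟨n₀, hn₀⟩ := hev.exists
  have hMδ : M * δ ≤ 1 / 8 := by
    rw [hδdef]
    rw [mul_inv_le_iff₀ (by positivity)]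
    nlinarith
  have hsmall : ∀ x ∈ S, ‖(L ^ n₀) x‖ ≤ 1 / 4 := by
    intro x hx
    obtain ⟨c, hct, hxc⟩ := Set.mem_iUnion₂.1 (hcover hx)
    have hxV : x ∈ Vs := hSV hx
    have hcV : c ∈ Vs := hSV (hts c hct)
    have h1 : ‖(L ^ n₀) (x - c)‖ ≤ M * ‖x - c‖ := hM n₀ _ (Vs.sub_mem hxV hcV)
    have hxcn : ‖x - c‖ < δ := mem_ball_iff_norm.1 hxc
    have hsplit : (L ^ n₀) x = (L ^ n₀) (x - c) + (L ^ n₀) c := by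
      rw [map_sub]; abel
    calc ‖(L ^ n₀) x‖ ≤ ‖(L ^ n₀) (x - c)‖ + ‖(L ^ n₀) c‖ := by
          rw [hsplit]; exact norm_add_le _ _
      _ ≤ M * ‖x - c‖ + 1 / 8 := add_le_add h1 (hn₀ c hct).le
      _ ≤ M * δ + 1 / 8 := by
          have := mul_le_mul_of_nonneg_left hxcn.le hMpos.le
          linarith
      _ ≤ 1 / 4 := by linarith
  -- half-contraction after N = n₀ + 1 steps
  have hhalf : ∀ g ∈ Vs, ‖(L ^ (n₀ + 1)) g‖ ≤ 2⁻¹ * ‖g‖ := by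
    intro g hg
    rcases eq_or_ne g 0 with rfl | hg0
    · simp
    have hgn : 0 < ‖g‖ := norm_pos_iff.2 hg0
    set u : Lp ℝ 2 μ01 := ‖g‖⁻¹ • g with hu
    have hu_norm : ‖u‖ = 1 := by
      rw [hu, norm_smul, norm_inv, norm_norm, inv_mul_cancel₀ hgn.ne']
    have huV : u ∈ Vs := Vs.smul_mem _ hg
    have huS : L u ∈ S := subset_closure ⟨u, ⟨mem_closedBall_zero_iff.2 hu_norm.le, huV⟩, rfl⟩
    have h4 : ‖(L ^ n₀) (L u)‖ ≤ 1 / 4 := hsmall _ huS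
    have heq : (L ^ n₀) (L u) = ‖g‖⁻¹ • ((L ^ (n₀ + 1)) g) := by
      rw [hu, pow_succ, ContinuousLinearMap.mul_apply, ContinuousLinearMap.map_smul, ContinuousLinearMap.map_smul]
    rw [heq, norm_smul, norm_inv, norm_norm] at h4
    rw [inv_mul_le_iff₀ hgn] at h4
    nlinarith [norm_nonneg ((L ^ (n₀ + 1)) g)]
  set N : ℕ := n₀ + 1 with hNdef
  have hNpos : (0 : ℝ) < (N : ℝ) := by positivity
  -- iterated contraction
  have hq : ∀ (q : ℕ) (g : Lp ℝ 2 μ01), g ∈ Vs →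
      ‖(L ^ (N * q)) g‖ ≤ (2⁻¹ : ℝ) ^ q * ‖g‖ := by
    intro q
    induction q with
    | zero =>
        intro g hg
        rw [Nat.mul_zero, pow_zero, ContinuousLinearMap.one_apply, pow_zero, one_mul]
    | succ q ih =>
        intro g hg
        have h1 : (L ^ (N * (q + 1))) g = (L ^ (N * q)) ((L ^ N) g) := by
          rw [Nat.mul_succ, pow_add, ContinuousLinearMap.mul_apply]
        rw [h1]
        calc ‖(L ^ (N * q)) ((L ^ N) g)‖ ≤ (2⁻¹ : ℝ) ^ q * ‖(L ^ N) g‖ :=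
              ih _ (hMemPow N g hg)
          _ ≤ (2⁻¹ : ℝ) ^ q * (2⁻¹ * ‖g‖) :=
              mul_le_mul_of_nonneg_left (hhalf g hg) (by positivity)
          _ = (2⁻¹ : ℝ) ^ (q + 1) * ‖g‖ := by ring
  -- exponential constants
  set lam : ℝ := Real.log 2⁻¹ / N with hlamdef
  have hlam : lam < 0 :=
    div_neg_of_neg_of_pos (Real.log_neg (by norm_num) (by norm_num)) hNpos
  have key : ∀ n : ℕ, ((2 : ℝ)⁻¹) ^ (n / N) ≤ 2 * Real.exp (lam * n) := by
    intro n
    set q : ℕ := n / N with hqdef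
    have hn_lt : (n : ℝ) < (N : ℝ) * ((q : ℝ) + 1) := by
      have h2 : n < N * (q + 1) := by
        have h1 : N * q + n % N = n := Nat.div_add_mod n N
        have h3 : n % N < N := Nat.mod_lt n (by omega)
        rw [Nat.mul_succ]
        omega
      exact_mod_cast h2
    have hexp : Real.exp (lam * n) = (2⁻¹ : ℝ) ^ ((n : ℝ) / N) := by
      rw [Real.rpow_def_of_pos (by norm_num : (0 : ℝ) < 2⁻¹)]
      congr 1
      rw [hlamdef]; ring
    have hle : (n : ℝ) / N ≤ (q : ℝ) + 1 := by
      rw [div_le_iff₀ hNpos]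
      nlinarith
    have h1 : (2⁻¹ : ℝ) ^ ((q : ℝ) + 1) ≤ (2⁻¹ : ℝ) ^ ((n : ℝ) / N) :=
      Real.rpow_le_rpow_of_exponent_ge (by norm_num) (by norm_num) hle
    have h2 : (2⁻¹ : ℝ) ^ ((q : ℝ) + 1) = (2⁻¹ : ℝ) ^ (q + 1 : ℕ) := by
      rw [← Real.rpow_natCast]
      push_cast
      ring_nf
    calc ((2 : ℝ)⁻¹) ^ q = 2 * (2⁻¹ : ℝ) ^ (q + 1 : ℕ) := by ring
      _ = 2 * (2⁻¹ : ℝ) ^ ((q : ℝ) + 1) := by rw [h2]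
      _ ≤ 2 * (2⁻¹ : ℝ) ^ ((n : ℝ) / N) := by linarith
      _ = 2 * Real.exp (lam * n) := by rw [hexp]
  -- part (ii)
  have hbound : ∀ g : Lp ℝ 2 μ01, (∫ x, g x ∂μ01) = 0 →
      ∀ n : ℕ, ‖(L ^ n) g‖ ≤ (2 * M) * Real.exp (lam * n) * ‖g‖ := by
    intro g hg n
    have hgV : g ∈ Vs := mem_Vs.2 hg
    have hsplit : (L ^ n) g = (L ^ (N * (n / N))) ((L ^ (n % N)) g) := by
      conv_lhs => rw [← Nat.div_add_mod n N, pow_add, ContinuousLinearMap.mul_apply]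
    rw [hsplit]
    calc ‖(L ^ (N * (n / N))) ((L ^ (n % N)) g)‖
        ≤ (2⁻¹ : ℝ) ^ (n / N) * ‖(L ^ (n % N)) g‖ := hq _ _ (hMemPow _ g hgV)
      _ ≤ (2⁻¹ : ℝ) ^ (n / N) * (M * ‖g‖) :=
          mul_le_mul_of_nonneg_left (hM _ g hgV) (by positivity)
      _ ≤ (2 * Real.exp (lam * n)) * (M * ‖g‖) :=
          mul_le_mul_of_nonneg_right (key n) (by positivity)
      _ = (2 * M) * Real.exp (lam * n) * ‖g‖ := by ring
  refine ⟨?_, 2 * M, by positivity, lam, hlam, hbound⟩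
  -- part (i)
  set h₁ : Lp ℝ 2 μ01 := L oneL - oneL with hh₁def
  have hh₁ : h₁ ∈ Vs := by
    refine mem_Vs.2 ?_
    rw [← Iclm_apply, hh₁def, map_sub, Iclm_apply, Iclm_apply, hint, sub_self]
  set a : ℕ → Lp ℝ 2 μ01 := fun k => (L ^ k) h₁ with hadef
  have hsum : Summable a := by
    refine Summable.of_norm_bounded (g := fun k => (2 * M * ‖h₁‖) * Real.exp lam ^ k) ?_ ?_
    · exact (summable_geometric_of_lt_one (Real.exp_nonneg _)
        (Real.exp_lt_one_iff.2 hlam)).mul_left _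
    · intro k
      have h := hbound h₁ (mem_Vs.1 hh₁) k
      calc ‖a k‖ ≤ 2 * M * Real.exp (lam * k) * ‖h₁‖ := h
        _ = (2 * M * ‖h₁‖) * Real.exp lam ^ k := by
            rw [← Real.exp_nat_mul, mul_comm (k : ℝ) lam]; ring
  set f₀ : Lp ℝ 2 μ01 := oneL + ∑' k, a k with hf₀def
  have hLa : ∀ k, L (a k) = a (k + 1) := by
    intro k
    rw [hadef]
    simp only []
    rw [pow_succ', ContinuousLinearMap.mul_apply]
  have ha0 : a 0 = h₁ := by simp [hadef]
  have hfix : L f₀ = f₀ := by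
    have hmt : L (∑' k, a k) = ∑' k, L (a k) := L.map_tsum hsum
    have hshift : ∑' k, a k = a 0 + ∑' k, a (k + 1) := Summable.tsum_eq_zero_add hsum
    have hLone : L oneL = oneL + a 0 := by rw [ha0, hh₁def]; abel
    calc L f₀ = L oneL + ∑' k, L (a k) := by rw [hf₀def, map_add, hmt]
      _ = (oneL + a 0) + ∑' k, a (k + 1) := by rw [hLone, tsum_congr hLa]
      _ = oneL + (a 0 + ∑' k, a (k + 1)) := by abel
      _ = oneL + ∑' k, a k := by rw [← hshift]
      _ = f₀ := rfl
  have hint₀ : ∫ x, f₀ x ∂μ01 = 1 := by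
    rw [← Iclm_apply, hf₀def, map_add]
    have h1 : Iclm (∑' k, a k) = ∑' k, Iclm (a k) := Iclm.map_tsum hsum
    have h2 : ∀ k, Iclm (a k) = 0 := by
      intro k
      rw [Iclm_apply]
      exact mem_Vs.1 (hMemPow k h₁ hh₁)
    rw [h1, tsum_congr h2, tsum_zero, add_zero, Iclm_apply, integral_oneL]
  refine ⟨f₀, ⟨hfix, hint₀⟩, ?_⟩
  rintro y ⟨hy1, hy2⟩
  set d : Lp ℝ 2 μ01 := y - f₀ with hddef
  have hdV : (∫ x, d x ∂μ01) = 0 := by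
    rw [← Iclm_apply, hddef, map_sub, Iclm_apply, Iclm_apply, hy2, hint₀, sub_self]
  have hLd : ∀ n : ℕ, (L ^ n) d = d := by
    intro n
    induction n with
    | zero => simp
    | succ n ih =>
        have hLd1 : L d = d := by rw [hddef, map_sub, hy1, hfix]
        rw [pow_succ', ContinuousLinearMap.mul_apply, ih, hLd1]
  have htend := hmix d hdV
  have hconst : (fun n : ℕ => ‖(L ^ n) d‖) = fun _ => ‖d‖ := by
    funext n; rw [hLd n]
  rw [hconst] at htend
  have hd0 : ‖d‖ = 0 := tendsto_nhds_unique tendsto_const_nhds htend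
  have : d = 0 := norm_eq_zero.1 hd0
  rw [hddef, sub_eq_zero] at this
  exact this
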